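/- Let (p̂_n)_{n≥1} be the real sequence defined by p̂_1 = 1 and p̂_n = (1/(n−1)) Σ_{j=1}^{n−1} (1 − p̂_j) p̂_{n−j} for n ≥ 2, and let P̂(z) = Σ_{k≥1} p̂_k z^k for −1 < z < 1. Then P̂ satisfies the Riccati differential equation z P̂'(z) = −P̂(z)² + P̂(z)/(1 − z) on (−1, 1). -/

import Mathlib

open MeasureTheory ProbabilityTheory Filter Asymptotics

/-- The sequence `p̂` stays in `[0,1]`. -/
lemma rrt_p_mem_unit (p : ℕ → ℝ) (h1 : p 1 = 1)
    (hrec : ∀ n : ℕ, 2 ≤ n →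
      p n = (1 / ((n : ℝ) - 1)) * ∑ j ∈ Finset.Icc 1 (n - 1), (1 - p j) * p (n - j)) :
    ∀ n : ℕ, 1 ≤ n → 0 ≤ p n ∧ p n ≤ 1 := by
  intro n
  induction n using Nat.strong_induction_on with
  | _ n ih =>
    intro hn
    rcases eq_or_lt_of_le hn with h | h
    · simp [← h, h1]
    · have h2 : 2 ≤ n := h
      have hterm : ∀ j ∈ Finset.Icc 1 (n - 1), 0 ≤ (1 - p j) * p (n - j) ∧
          (1 - p j) * p (n - j) ≤ 1 := by
        intro j hj
        simp only [Finset.mem_Icc] at hj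
        have hj1 : j < n := lt_of_le_of_lt hj.2 (by omega)
        have hnj : n - j < n := by omega
        have hpj := ih j hj1 hj.1
        have hpnj := ih (n - j) hnj (by omega)
        constructor
        · exact mul_nonneg (by linarith [hpj.2]) hpnj.1
        · nlinarith [hpj.1, hpj.2, hpnj.1, hpnj.2]
      have hsum0 : 0 ≤ ∑ j ∈ Finset.Icc 1 (n - 1), (1 - p j) * p (n - j) :=
        Finset.sum_nonneg fun j hj => (hterm j hj).1
      have hsum1 : ∑ j ∈ Finset.Icc 1 (n - 1), (1 - p j) * p (n - j) ≤ (n : ℝ) - 1 := by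
        calc ∑ j ∈ Finset.Icc 1 (n - 1), (1 - p j) * p (n - j)
            ≤ ∑ _j ∈ Finset.Icc 1 (n - 1), (1 : ℝ) :=
              Finset.sum_le_sum fun j hj => (hterm j hj).2
          _ = ((n : ℝ) - 1) := by
              rw [Finset.sum_const, Nat.card_Icc, nsmul_eq_mul, mul_one]
              have h' : n - 1 + 1 - 1 = n - 1 := by omega
              rw [h', Nat.cast_sub (by omega), Nat.cast_one]
      have hpos : (0 : ℝ) < (n : ℝ) - 1 := by
        have : (2 : ℝ) ≤ (n : ℝ) := by exact_mod_cast h2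
        linarith
      rw [hrec n h2]
      constructor
      · positivity
      · rw [div_mul_eq_mul_div, one_mul, div_le_one hpos]
        exact hsum1

/-- For the sequence `p̂` defined by `p̂₁ = 1` and
`p̂ₙ = (1/(n-1)) Σ_{j=1}^{n-1} (1 - p̂ⱼ) p̂_{n-j}` for `n ≥ 2`, the power series
`P̂(z) = Σ_{k≥1} p̂ₖ zᵏ` satisfies the Riccati equation
`z P̂'(z) = -P̂(z)² + P̂(z)/(1-z)` on `(-1, 1)`. -/
theorem rrt_generating_function_riccati (p : ℕ → ℝ) (h1 : p 1 = 1)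
    (hrec : ∀ n : ℕ, 2 ≤ n →
      p n = (1 / ((n : ℝ) - 1)) * ∑ j ∈ Finset.Icc 1 (n - 1), (1 - p j) * p (n - j))
    (z : ℝ) (hz1 : -1 < z) (hz2 : z < 1) :
    ∃ d : ℝ,
      HasDerivAt (fun w : ℝ => ∑' k : ℕ, p (k + 1) * w ^ (k + 1)) d z ∧
        z * d = -(∑' k : ℕ, p (k + 1) * z ^ (k + 1)) ^ 2 +
          (∑' k : ℕ, p (k + 1) * z ^ (k + 1)) / (1 - z) := by
  have hp := rrt_p_mem_unit p h1 hrec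
  have hpabs : ∀ k : ℕ, |p (k + 1)| ≤ 1 := by
    intro k
    have := hp (k + 1) (by omega)
    rw [abs_le]; constructor <;> linarith [this.1, this.2]
  have hzabs : |z| < 1 := abs_lt.2 ⟨hz1, hz2⟩
  set r : ℝ := (1 + |z|) / 2 with hr
  have hr0 : 0 ≤ r := by positivity
  have hzr : |z| < r := by rw [hr]; linarith
  have hr1 : r < 1 := by rw [hr]; linarith
  -- summability of the bound on derivatives
  have hu : Summable (fun k : ℕ => ((k : ℝ) + 1) * r ^ k) := by
    have h1' : Summable (fun k : ℕ => (k : ℝ) ^ 1 * r ^ k) :=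
      summable_pow_mul_geometric_of_norm_lt_one 1 (by rwa [Real.norm_eq_abs, abs_of_nonneg hr0])
    have h2' : Summable (fun k : ℕ => r ^ k) :=
      summable_geometric_of_lt_one hr0 hr1
    simpa [add_mul, pow_one] using h1'.add h2'
  -- derivative of each term
  have hderiv : ∀ (k : ℕ) (y : ℝ),
      HasDerivAt (fun w : ℝ => p (k + 1) * w ^ (k + 1))
        (p (k + 1) * (((k : ℝ) + 1) * y ^ k)) y := by
    intro k y
    have := (hasDerivAt_pow (k + 1) y).const_mul (p (k + 1))
    simpa using this
  -- absolute summability of the series at any |y| ≤ s < 1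
  have hfs : ∀ y : ℝ, |y| < 1 → Summable (fun k : ℕ => p (k + 1) * y ^ (k + 1)) := by
    intro y hy
    apply Summable.of_norm_bounded (g := fun k : ℕ => |y| ^ (k + 1))
    · exact (summable_geometric_of_lt_one (abs_nonneg y) hy).comp_injective
        (add_left_injective 1)
    · intro k
      rw [Real.norm_eq_abs, abs_mul, abs_pow]
      calc |p (k + 1)| * |y| ^ (k + 1) ≤ 1 * |y| ^ (k + 1) := by
            apply mul_le_mul_of_nonneg_right (hpabs k) (by positivity)
        _ = |y| ^ (k + 1) := one_mul _
  -- the derivative of the sum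
  have hmain : HasDerivAt (fun w : ℝ => ∑' k : ℕ, p (k + 1) * w ^ (k + 1))
      (∑' k : ℕ, p (k + 1) * (((k : ℝ) + 1) * z ^ k)) z := by
    apply hasDerivAt_tsum_of_isPreconnected hu (isOpen_Ioo (a := -r) (b := r))
      (isPreconnected_Ioo) (fun k y _ => hderiv k y)
    · intro k y hy
      have hyr : |y| ≤ r := by
        rw [abs_le]; exact ⟨le_of_lt hy.1, le_of_lt hy.2⟩
      rw [Real.norm_eq_abs, abs_mul, abs_mul, abs_pow]
      calc |p (k + 1)| * (|(k : ℝ) + 1| * |y| ^ k)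
          ≤ 1 * (((k : ℝ) + 1) * r ^ k) := by
            apply mul_le_mul (hpabs k) _ (by positivity) zero_le_one
            rw [abs_of_nonneg (by positivity : (0:ℝ) ≤ (k : ℝ) + 1)]
            exact mul_le_mul_of_nonneg_left (pow_le_pow_left₀ (abs_nonneg y) hyr k)
              (by positivity)
        _ = ((k : ℝ) + 1) * r ^ k := one_mul _
    · exact Set.mem_Ioo.2 ⟨by linarith [neg_abs_le z], lt_of_le_of_lt (le_abs_self z) hzr⟩
    · exact hfs z hzabs
    · exact Set.mem_Ioo.2 ⟨by linarith [neg_abs_le z], lt_of_le_of_lt (le_abs_self z) hzr⟩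
  refine ⟨_, hmain, ?_⟩
  -- Now the algebraic identity.
  have hpabs' : ∀ m : ℕ, 1 ≤ m → |p m| ≤ 1 := by
    intro m hm
    have := hp m hm
    rw [abs_le]; constructor <;> linarith [this.1, this.2]
  set f : ℕ → ℝ := fun k => p (k + 1) * z ^ (k + 1) with hfdef
  set g : ℕ → ℝ := fun l => z ^ (l + 1) with hgdef
  have hgeo : Summable (fun k : ℕ => |z| ^ (k + 1)) :=
    (summable_geometric_of_lt_one (abs_nonneg z) hzabs).comp_injective (add_left_injective 1)
  have hfnorm : Summable (fun k : ℕ => ‖f k‖) := by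
    apply Summable.of_nonneg_of_le (fun k => norm_nonneg _) _ hgeo
    intro k
    rw [hfdef, Real.norm_eq_abs, abs_mul, abs_pow]
    calc |p (k + 1)| * |z| ^ (k + 1) ≤ 1 * |z| ^ (k + 1) :=
          mul_le_mul_of_nonneg_right (hpabs k) (by positivity)
      _ = |z| ^ (k + 1) := one_mul _
  have hgnorm : Summable (fun l : ℕ => ‖g l‖) := by
    apply Summable.of_nonneg_of_le (fun k => norm_nonneg _) _ hgeo
    intro k
    rw [hgdef, Real.norm_eq_abs, abs_pow]
  have hf : Summable f := hfnorm.of_norm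
  have hgsum : ∑' l : ℕ, g l = z / (1 - z) := by
    have h' : ∀ l : ℕ, g l = z ^ l * z := fun l => pow_succ z l
    rw [tsum_congr h', tsum_mul_right,
      tsum_geometric_of_norm_lt_one (by rwa [Real.norm_eq_abs])]
    have h1z : (1 : ℝ) - z ≠ 0 := by intro h; linarith [sub_eq_zero.mp h]
    field_simp
  -- Cauchy products
  have hSg : (∑' k : ℕ, f k) * (z / (1 - z))
      = ∑' m : ℕ, ∑ kl ∈ Finset.HasAntidiagonal.antidiagonal m, f kl.1 * g kl.2 := by
    rw [← hgsum]
    exact tsum_mul_tsum_eq_tsum_sum_antidiagonal_of_summable_norm hfnorm hgnorm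
  have hSS : (∑' k : ℕ, f k) * (∑' k : ℕ, f k)
      = ∑' m : ℕ, ∑ kl ∈ Finset.HasAntidiagonal.antidiagonal m, f kl.1 * f kl.2 :=
    tsum_mul_tsum_eq_tsum_sum_antidiagonal_of_summable_norm hfnorm hfnorm
  -- rewrite Icc sums as range sums
  have hIcc : ∀ (F : ℕ → ℝ) (k : ℕ),
      ∑ j ∈ Finset.Icc 1 k, F j = ∑ i ∈ Finset.range k, F (i + 1) := by
    intro F k
    rw [← Finset.Ico_add_one_right_eq_Icc, Finset.sum_Ico_eq_sum_range]
    simp [Nat.add_comm]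
  set A : ℕ → ℝ := fun k => (∑ j ∈ Finset.Icc 1 k, p (k + 1 - j)) * z ^ (k + 1) with hAdef
  set B : ℕ → ℝ := fun k => (∑ j ∈ Finset.Icc 1 k, p j * p (k + 1 - j)) * z ^ (k + 1) with hBdef
  -- pointwise recurrence identity
  have key : ∀ k : ℕ, ((k : ℝ) + 1) * (p (k + 1) * z ^ (k + 1)) = f k + (A k - B k) := by
    intro k
    rcases Nat.eq_zero_or_pos k with hk | hk
    · subst hk; simp [hfdef, hAdef, hBdef]
    · have h2 : 2 ≤ k + 1 := by omega
      have hr' := hrec (k + 1) h2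
      rw [Nat.add_sub_cancel] at hr'
      have hk' : ((k + 1 : ℕ) : ℝ) - 1 = (k : ℝ) := by push_cast; ring
      rw [hk'] at hr'
      have hkne : (k : ℝ) ≠ 0 := Nat.cast_ne_zero.2 (by omega)
      have hmul : (k : ℝ) * p (k + 1)
          = ∑ j ∈ Finset.Icc 1 k, (1 - p j) * p (k + 1 - j) := by
        rw [hr']; field_simp
      have hsplit : ∑ j ∈ Finset.Icc 1 k, (1 - p j) * p (k + 1 - j)
          = (∑ j ∈ Finset.Icc 1 k, p (k + 1 - j))
            - ∑ j ∈ Finset.Icc 1 k, p j * p (k + 1 - j) := by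
        rw [← Finset.sum_sub_distrib]
        exact Finset.sum_congr rfl fun j _ => by ring
      have hkp : (k : ℝ) * p (k + 1)
          = (∑ j ∈ Finset.Icc 1 k, p (k + 1 - j))
            - ∑ j ∈ Finset.Icc 1 k, p j * p (k + 1 - j) := by rw [hmul, hsplit]
      calc ((k : ℝ) + 1) * (p (k + 1) * z ^ (k + 1))
          = (p (k + 1) + (k : ℝ) * p (k + 1)) * z ^ (k + 1) := by ring
        _ = (p (k + 1) + ((∑ j ∈ Finset.Icc 1 k, p (k + 1 - j))
              - ∑ j ∈ Finset.Icc 1 k, p j * p (k + 1 - j))) * z ^ (k + 1) := by rw [hkp]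
        _ = f k + (A k - B k) := by rw [hfdef, hAdef, hBdef]; ring
  -- summability of A and B
  have husum : Summable (fun k : ℕ => (k : ℝ) * |z| ^ (k + 1)) := by
    have h' : Summable (fun k : ℕ => (k : ℝ) ^ 1 * |z| ^ k) :=
      summable_pow_mul_geometric_of_norm_lt_one 1
        (by rwa [Real.norm_eq_abs, abs_abs])
    have h'' := h'.mul_right |z|
    apply h''.congr
    intro k
    rw [pow_one, pow_succ]
    ring
  have habsbound : ∀ (q : ℕ → ℝ), (∀ m, 1 ≤ m → |q m| ≤ 1) → ∀ k : ℕ,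
      |∑ j ∈ Finset.Icc 1 k, q (k + 1 - j)| ≤ (k : ℝ) := by
    intro q hq k
    calc |∑ j ∈ Finset.Icc 1 k, q (k + 1 - j)|
        ≤ ∑ j ∈ Finset.Icc 1 k, |q (k + 1 - j)| := Finset.abs_sum_le_sum_abs _ _
      _ ≤ ∑ _j ∈ Finset.Icc 1 k, (1 : ℝ) := by
          apply Finset.sum_le_sum
          intro j hj
          simp only [Finset.mem_Icc] at hj
          exact hq _ (by omega)
      _ = (k : ℝ) := by simp
  have hA : Summable A := by
    apply Summable.of_norm_bounded husum
    intro k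
    rw [hAdef, Real.norm_eq_abs, abs_mul, abs_pow]
    exact mul_le_mul_of_nonneg_right (habsbound p hpabs' k) (by positivity)
  have hB : Summable B := by
    apply Summable.of_norm_bounded husum
    intro k
    rw [hBdef, Real.norm_eq_abs, abs_mul, abs_pow]
    refine mul_le_mul_of_nonneg_right ?_ (by positivity)
    calc |∑ j ∈ Finset.Icc 1 k, p j * p (k + 1 - j)|
        ≤ ∑ j ∈ Finset.Icc 1 k, |p j * p (k + 1 - j)| := Finset.abs_sum_le_sum_abs _ _
      _ ≤ ∑ _j ∈ Finset.Icc 1 k, (1 : ℝ) := by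
          apply Finset.sum_le_sum
          intro j hj
          simp only [Finset.mem_Icc] at hj
          rw [abs_mul]
          calc |p j| * |p (k + 1 - j)| ≤ 1 * 1 := by
                apply mul_le_mul (hpabs' _ (by omega)) (hpabs' _ (by omega))
                  (abs_nonneg _) zero_le_one
            _ = 1 := by ring
      _ = (k : ℝ) := by simp
  -- identify the shifted A and B with the Cauchy products
  have hAval : ∀ m : ℕ, A (m + 1) = ∑ kl ∈ Finset.HasAntidiagonal.antidiagonal m, f kl.1 * g kl.2 := by
    intro m
    rw [Finset.Nat.sum_antidiagonal_eq_sum_range_succ_mk]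
    have hterm : ∀ k ∈ Finset.range (m + 1),
        f k * g (m - k) = p (k + 1) * z ^ (m + 2) := by
      intro k hk
      simp only [Finset.mem_range] at hk
      have hk' : k + 1 + (m - k + 1) = m + 2 := by omega
      rw [hfdef, hgdef]
      simp only
      rw [mul_assoc, ← pow_add, hk']
    rw [Finset.sum_congr rfl hterm, ← Finset.sum_mul]
    rw [hAdef]
    simp only
    congr 1
    rw [hIcc]
    rw [← Finset.sum_range_reflect (fun i => p (i + 1)) (m + 1)]
    apply Finset.sum_congr rfl
    intro i hi
    simp only [Finset.mem_range] at hi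
    congr 1
    omega
  have hBval : ∀ m : ℕ, B (m + 1) = ∑ kl ∈ Finset.HasAntidiagonal.antidiagonal m, f kl.1 * f kl.2 := by
    intro m
    rw [Finset.Nat.sum_antidiagonal_eq_sum_range_succ_mk]
    have hterm : ∀ k ∈ Finset.range (m + 1),
        f k * f (m - k) = p (k + 1) * p (m - k + 1) * z ^ (m + 2) := by
      intro k hk
      simp only [Finset.mem_range] at hk
      have hk' : k + 1 + (m - k + 1) = m + 2 := by omega
      rw [hfdef]
      simp only
      rw [show p (k + 1) * z ^ (k + 1) * (p (m - k + 1) * z ^ (m - k + 1))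
          = p (k + 1) * p (m - k + 1) * z ^ (k + 1 + (m - k + 1)) by ring, hk']
    rw [Finset.sum_congr rfl hterm, ← Finset.sum_mul]
    rw [hBdef]
    simp only
    congr 1
    rw [hIcc]
    apply Finset.sum_congr rfl
    intro i hi
    simp only [Finset.mem_range] at hi
    congr 2
    omega
  have hA0 : A 0 = 0 := by simp [hAdef]
  have hB0 : B 0 = 0 := by simp [hBdef]
  have hAsum : ∑' k : ℕ, A k = (∑' k : ℕ, f k) * (z / (1 - z)) := by
    rw [Summable.tsum_eq_zero_add hA, hA0, zero_add, tsum_congr hAval, ← hSg]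
  have hBsum : ∑' k : ℕ, B k = (∑' k : ℕ, f k) * (∑' k : ℕ, f k) := by
    rw [Summable.tsum_eq_zero_add hB, hB0, zero_add, tsum_congr hBval, ← hSS]
  -- final assembly
  have hzd : z * (∑' k : ℕ, p (k + 1) * (((k : ℝ) + 1) * z ^ k))
      = ∑' k : ℕ, ((k : ℝ) + 1) * (p (k + 1) * z ^ (k + 1)) := by
    rw [← tsum_mul_left]
    exact tsum_congr fun k => by ring
  have hsplitsum : ∑' k : ℕ, ((k : ℝ) + 1) * (p (k + 1) * z ^ (k + 1))
      = (∑' k : ℕ, f k) + ((∑' k : ℕ, A k) - ∑' k : ℕ, B k) := by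
    rw [tsum_congr key, Summable.tsum_add hf (hA.sub hB), Summable.tsum_sub hA hB]
  have hfS : (∑' k : ℕ, p (k + 1) * z ^ (k + 1)) = ∑' k : ℕ, f k := rfl
  rw [hzd, hsplitsum, hAsum, hBsum, hfS]
  have h1z : (1 : ℝ) - z ≠ 0 := by intro h; linarith [sub_eq_zero.mp h]
  field_simp
  ring
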